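/- Let (M,d) be a compact metric space and let {X_t}_{t∈ℝ} be a continuous flow on M which is kinematic expansive, i.e., for every ε > 0 there exists δ > 0 such that whenever x, y ∈ M satisfy d(X_t(x), X_t(y)) ≤ δ for all t ∈ ℝ, then y ∈ X_{[-ε,ε]}(x). Then the time-one map X_1 is entropy-expansive: there exists δ > 0 such that h_top(X_1, B^∞_δ(x, X_1)) = 0 for every x ∈ M. -/

import Mathlib

open Set Filter Dynamics UniformSpace ENNReal

section Aux

variable {M : Type*} [MetricSpace M] [CompactSpace M]
  (X : ℝ → M → M)
  (hcont : Continuous fun p : ℝ × M => X p.1 p.2)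
  (hX0 : ∀ x : M, X 0 x = x)
  (hXadd : ∀ t s : ℝ, ∀ x : M, X (t + s) x = X t (X s x))

include hcont in
/-- Uniform continuity of the flow over the compact time interval `[-1,1]`. -/
lemma flow_unif_cont {η : ℝ} (hη : 0 < η) :
    ∃ δ : ℝ, 0 < δ ∧ ∀ t ∈ Set.Icc (-1:ℝ) 1, ∀ a b : M, dist a b < δ →
      dist (X t a) (X t b) < η := by
  have hK : IsCompact ((Set.Icc (-1:ℝ) 1) ×ˢ (Set.univ : Set M)) :=
    isCompact_Icc.prod isCompact_univ
  have huc := hK.uniformContinuousOn_of_continuous hcont.continuousOn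
  rcases Metric.uniformContinuousOn_iff.1 huc η hη with ⟨δ, hδ, H⟩
  refine ⟨δ, hδ, fun t ht a b hab => ?_⟩
  have hd : dist ((t, a) : ℝ × M) (t, b) < δ := by
    simp only [Prod.dist_eq, dist_self, max_lt_iff]
    exact ⟨hδ, hab⟩
  exact H (t, a) (by simp [ht]) (t, b) (by simp [ht]) hd

include hcont hX0 in
/-- Points do not move much in small time, uniformly. -/
lemma flow_small_time {η : ℝ} (hη : 0 < η) :
    ∃ r : ℝ, 0 < r ∧ r ≤ 1 ∧ ∀ u : ℝ, |u| ≤ r → ∀ w : M, dist (X u w) w < η := by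
  have hK : IsCompact ((Set.Icc (-1:ℝ) 1) ×ˢ (Set.univ : Set M)) :=
    isCompact_Icc.prod isCompact_univ
  have huc := hK.uniformContinuousOn_of_continuous hcont.continuousOn
  rcases Metric.uniformContinuousOn_iff.1 huc η hη with ⟨δ, hδ, H⟩
  refine ⟨min (δ/2) 1, by positivity, min_le_right _ _, fun u hu w => ?_⟩
  have hu1 : |u| ≤ 1 := hu.trans (min_le_right _ _)
  have hu2 : |u| < δ := lt_of_le_of_lt (hu.trans (min_le_left _ _)) (by linarith)
  have habs := abs_le.1 hu1
  have hd : dist ((u, w) : ℝ × M) (0, w) < δ := by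
    simp only [Prod.dist_eq, dist_self, Real.dist_eq, sub_zero, max_lt_iff]
    exact ⟨hu2, hδ⟩
  have h2 := H (u, w) (by simp [habs.1, habs.2]) (0, w) (by simp) hd
  simpa [hX0 w] using h2

omit [MetricSpace M] [CompactSpace M] in
include hX0 hXadd in
lemma flow_iterate (k : ℕ) (z : M) : (X 1)^[k] z = X (k : ℝ) z := by
  induction k with
  | zero => simp [hX0]
  | succ k ih =>
      rw [Function.iterate_succ_apply', ih, ← hXadd 1 (k : ℝ) z]
      norm_num
      ring_nf

end Aux

/-- A kinematic expansive continuous flow on a compact metric space has an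
entropy-expansive time-one map: there is `δ > 0` such that the topological entropy of `X 1`
on every `δ`-infinite dynamical ball `B^∞_δ(x, X 1)` is zero. -/
theorem kinematicExpansive_implies_timeOne_entropyExpansive
    {M : Type*} [MetricSpace M] [CompactSpace M]
    (X : ℝ → M → M)
    (hcont : Continuous fun p : ℝ × M => X p.1 p.2)
    (hX0 : ∀ x : M, X 0 x = x)
    (hXadd : ∀ t s : ℝ, ∀ x : M, X (t + s) x = X t (X s x))
    (hkin : ∀ ε : ℝ, 0 < ε → ∃ δ : ℝ, 0 < δ ∧ ∀ x y : M,
      (∀ t : ℝ, dist (X t x) (X t y) ≤ δ) →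
      y ∈ (fun s : ℝ => X s x) '' Set.Icc (-ε) ε) :
    ∃ δ : ℝ, 0 < δ ∧ ∀ x : M,
      Dynamics.coverEntropy (X 1)
        {y : M | ∀ n : ℤ, dist (X (n : ℝ) x) (X (n : ℝ) y) ≤ δ} = 0 := by
  -- Get δ₁ from kinematic expansivity with ε = 1.
  classical
  obtain ⟨δ₁, hδ₁, hk⟩ := hkin 1 one_pos
  -- Get δA from uniform continuity with η = δ₁.
  obtain ⟨δA, hδA, hA⟩ := flow_unif_cont X hcont hδ₁
  refine ⟨δA / 2, by positivity, fun x => ?_⟩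
  set B : Set M := {y : M | ∀ n : ℤ, dist (X (n : ℝ) x) (X (n : ℝ) y) ≤ δA / 2} with hB
  have hxB : x ∈ B := fun n => by simp only [dist_self]; positivity
  -- Every point of B lies on the orbit segment X_{[-1,1]}(x).
  have hBorb : ∀ y ∈ B, ∃ u ∈ Set.Icc (-1:ℝ) 1, X u x = y := by
    intro y hy
    have hdist : ∀ t : ℝ, dist (X t x) (X t y) ≤ δ₁ := by
      intro t
      set n : ℤ := ⌊t⌋ with hn
      have hs : t - n ∈ Set.Icc (0:ℝ) 1 := by
        constructor
        · linarith [Int.floor_le t]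
        · linarith [Int.lt_floor_add_one t]
      have ht : t = (t - n) + n := by ring
      have h1 : X t x = X (t - n) (X (n : ℝ) x) := by
        rw [← hXadd, sub_add_cancel]
      have h2 : X t y = X (t - n) (X (n : ℝ) y) := by
        rw [← hXadd, sub_add_cancel]
      rw [h1, h2]
      exact le_of_lt (hA (t - n) ⟨by linarith [hs.1], hs.2⟩ _ _
        (lt_of_le_of_lt (hy n) (by linarith)))
    obtain ⟨u, hu, huy⟩ := hk x y hdist
    exact ⟨u, hu, huy⟩
  -- Entropy is zero.
  refine le_antisymm ?_ (Dynamics.coverEntropy_nonneg (X 1) ⟨x, hxB⟩)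
  refine iSup₂_le fun U hU => ?_
  -- Reduce to a metric ball inside U.
  rcases Metric.mem_uniformity_dist.1 hU with ⟨η, hη, hUη⟩
  -- Small-time uniform bound.
  obtain ⟨r, hr, hr1, hrsmall⟩ := flow_small_time X hcont hX0 hη
  -- Finitely many time points covering [-1,1] within r.
  have hcover : Set.Icc (-1:ℝ) 1 ⊆ ⋃ u ∈ Set.Icc (-1:ℝ) 1, Metric.ball u r :=
    fun u hu => Set.mem_biUnion hu (Metric.mem_ball_self hr)
  obtain ⟨b, hbsub, hbfin, hbcov⟩ :=
    isCompact_Icc.elim_finite_subcover_image (fun u _ => Metric.isOpen_ball) hcover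
  -- The candidate dynamical cover.
  set s : Finset M := hbfin.toFinset.image (fun u => X u x) with hsdef
  have hcov : ∀ n : ℕ, Dynamics.IsDynCoverOf (X 1) B U n (s : Set M) := by
    intro n y hy
    obtain ⟨u, hu, huy⟩ := hBorb y hy
    obtain ⟨v, hv, hvball⟩ := Set.mem_iUnion₂.1 (hbcov hu)
    have hmem : X v x ∈ (s : Set M) := by
      simp only [hsdef, Finset.coe_image, Set.Finite.coe_toFinset]
      exact ⟨v, hv, rfl⟩
    refine ⟨X v x, hmem, ?_⟩
    · rw [Dynamics.mem_dynEntourage]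
      intro k _
      rw [flow_iterate X hX0 hXadd k, flow_iterate X hX0 hXadd k, ← huy]
      apply hUη
      rw [dist_comm]
      have e1 : X (k : ℝ) (X v x) = X (v - u) (X ((k : ℝ) + u) x) := by
        rw [← hXadd, ← hXadd]; ring_nf
      have e2 : X (k : ℝ) (X u x) = X ((k : ℝ) + u) x := by
        rw [← hXadd]
      rw [e1, e2]
      exact hrsmall (v - u) (le_of_lt (by simpa [Metric.mem_ball, Real.dist_eq,
        abs_sub_comm] using hvball)) _
  -- coverMincard is bounded by the (constant) cardinality of s.
  have hmin : ∀ n : ℕ, Dynamics.coverMincard (X 1) B U n ≤ (s.card : ℕ∞) :=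
    fun n => (hcov n).coverMincard_le_card
  have hsne : s.Nonempty := by
    have := (hcov 1).nonempty ⟨x, hxB⟩
    rcases this with ⟨z, hz⟩
    exact ⟨z, hz⟩
  have hcard1 : 1 ≤ s.card := Finset.card_pos.2 hsne
  -- The limsup bound.
  have hlog : ∀ n : ℕ, ENNReal.log (Dynamics.coverMincard (X 1) B U n) / (n : EReal)
      ≤ ENNReal.log ((s.card : ℕ∞) : ℝ≥0∞) / (n : EReal) := by
    intro n
    exact EReal.monotone_div_right_of_nonneg (by exact_mod_cast Nat.cast_nonneg n)
      (ENNReal.log_monotone (by exact_mod_cast hmin n))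
  have hC_ne_bot : (ENNReal.log ((s.card : ℕ∞) : ℝ≥0∞)) ≠ ⊥ := by
    rw [Ne, ENNReal.log_eq_bot_iff]
    simp only [← ENat.toENNReal_zero, ENat.toENNReal_inj]
    exact_mod_cast Nat.one_le_iff_ne_zero.1 hcard1
  have hC_ne_top : (ENNReal.log ((s.card : ℕ∞) : ℝ≥0∞)) ≠ ⊤ := by
    rw [Ne, ENNReal.log_eq_top_iff]
    simp
  have htend := EReal.tendsto_const_div_atTop_nhds_zero_nat hC_ne_bot hC_ne_top
  calc Dynamics.coverEntropyEntourage (X 1) B U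
      ≤ atTop.limsup (fun n : ℕ => ENNReal.log ((s.card : ℕ∞) : ℝ≥0∞) / (n : EReal)) :=
        Filter.limsup_le_limsup (Filter.Eventually.of_forall hlog)
    _ = 0 := htend.limsup_eq
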